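/- Let (Ω, ℙ) be a probability space and X₁,…,X_m : Ω → ℝ (m ≥ 1) pairwise uncorrelated square-integrable random variables with means μₗ, variances σₗ² (σₗ > 0), and skewness parameters λₗ. Let Z : ℝ^m → ℝ be affine, Z(x) = b + Σₗ aₗ·xₗ. Then the two-point estimate of the second raw moment, Σ_{l=1}^{m} Σ_{k=1}^{2} w_{l,k} · (Z(μ₁, …, P_{l,k}, …, μ_m))², equals the exact second raw moment E[Z(X₁,…,X_m)²] = (b + Σₗ aₗ·μₗ)² + Σₗ aₗ²·σₗ²; consequently the TPE estimate of the variance of Z is also exact in this case. -/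

import Mathlib

open MeasureTheory

/-- For pairwise uncorrelated square-integrable random variables and an affine
function `Z(x) = b + Σₗ aₗ·xₗ`, Hong's two-point estimate of the second raw
moment equals the exact value `E[Z²] = (b + Σₗ aₗ·μₗ)² + Σₗ aₗ²·σₗ²`;
consequently the TPE estimate of the variance of `Z` is also exact. -/
theorem tpe_second_raw_moment_exact_for_affine
    {Ω : Type*} [MeasurableSpace Ω] (P : Measure Ω) [IsProbabilityMeasure P]
    (m : ℕ) (hm : 1 ≤ m) (X : Fin m → Ω → ℝ) (μ σ lam : Fin m → ℝ)
    (hint : ∀ l, Integrable (X l) P)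
    (hint2 : ∀ l, Integrable (fun ω => (X l ω) ^ 2) P)
    (hmean : ∀ l, ∫ ω, X l ω ∂P = μ l)
    (hσ : ∀ l, 0 < σ l)
    (hvar : ∀ l, ∫ ω, (X l ω - μ l) ^ 2 ∂P = (σ l) ^ 2)
    (huncorr : ∀ i j, i ≠ j → ∫ ω, (X i ω - μ i) * (X j ω - μ j) ∂P = 0)
    (ξ w Pt : Fin m → Fin 2 → ℝ)
    (hξ₁ : ∀ l, ξ l 0 = lam l / 2 + Real.sqrt ((m : ℝ) + (lam l / 2) ^ 2))
    (hξ₂ : ∀ l, ξ l 1 = lam l / 2 - Real.sqrt ((m : ℝ) + (lam l / 2) ^ 2))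
    (hw₁ : ∀ l, w l 0 = -(1 / (m : ℝ)) * ξ l 1 / (ξ l 0 - ξ l 1))
    (hw₂ : ∀ l, w l 1 = (1 / (m : ℝ)) * ξ l 0 / (ξ l 0 - ξ l 1))
    (hPt : ∀ l k, Pt l k = μ l + ξ l k * σ l)
    (Z : (Fin m → ℝ) → ℝ) (b : ℝ) (a : Fin m → ℝ)
    (hZ : ∀ x, Z x = b + ∑ l, a l * x l) :
    (∑ l, ∑ k, w l k * (Z (Function.update μ l (Pt l k))) ^ 2) =
        ∫ ω, (Z (fun l => X l ω)) ^ 2 ∂P ∧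
      (∫ ω, (Z (fun l => X l ω)) ^ 2 ∂P) =
        (b + ∑ l, a l * μ l) ^ 2 + ∑ l, (a l) ^ 2 * (σ l) ^ 2 ∧
      (∑ l, ∑ k, w l k * (Z (Function.update μ l (Pt l k))) ^ 2) -
          (∑ l, ∑ k, w l k * Z (Function.update μ l (Pt l k))) ^ 2 =
        (∫ ω, (Z (fun l => X l ω)) ^ 2 ∂P) -
          (∫ ω, Z (fun l => X l ω) ∂P) ^ 2 := by
  have hm0 : (m : ℝ) ≠ 0 := Nat.cast_ne_zero.mpr (by omega)
  have hm1 : (1 : ℝ) ≤ (m : ℝ) := by exact_mod_cast hm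
  set S : ℝ := b + ∑ l, a l * μ l with hS
  -- basic facts about ξ
  have hnn : ∀ l : Fin m, (0:ℝ) ≤ (m : ℝ) + (lam l / 2) ^ 2 := fun l => by positivity
  have hsq : ∀ l : Fin m, Real.sqrt ((m : ℝ) + (lam l / 2) ^ 2) ^ 2
      = (m : ℝ) + (lam l / 2) ^ 2 := fun l => Real.sq_sqrt (hnn l)
  have hspos : ∀ l : Fin m, 0 < Real.sqrt ((m : ℝ) + (lam l / 2) ^ 2) := fun l =>
    Real.sqrt_pos.mpr (by nlinarith [sq_nonneg (lam l / 2)])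
  have hdne : ∀ l : Fin m, ξ l 0 - ξ l 1 ≠ 0 := by
    intro l
    rw [hξ₁, hξ₂]
    have := hspos l
    intro h; nlinarith
  have hprod : ∀ l : Fin m, ξ l 0 * ξ l 1 = -(m : ℝ) := by
    intro l
    rw [hξ₁, hξ₂]
    have := hsq l
    nlinarith
  have hA : ∀ l : Fin m, w l 0 + w l 1 = 1 / (m : ℝ) := by
    intro l
    rw [hw₁, hw₂]
    field_simp [hdne l]
    ring
  have hB : ∀ l : Fin m, w l 0 * ξ l 0 + w l 1 * ξ l 1 = 0 := by
    intro l
    rw [hw₁, hw₂]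
    field_simp [hdne l]
    ring
  have hC : ∀ l : Fin m, w l 0 * ξ l 0 ^ 2 + w l 1 * ξ l 1 ^ 2 = 1 := by
    intro l
    rw [hw₁, hw₂]
    have hp := hprod l
    field_simp [hdne l]
    nlinarith [hp, hdne l, congrArg (fun t => t * (ξ l 0 - ξ l 1)) hp]
  -- value of Z at update points
  have hsum_upd : ∀ (l : Fin m) (v : ℝ),
      (∑ j, a j * Function.update μ l v j) = (∑ j, a j * μ j) + a l * (v - μ l) := by
    intro l v
    have h : (fun j => a j * Function.update μ l v j)
        = Function.update (fun j => a j * μ j) l (a l * v) := by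
      funext j; by_cases h : j = l <;> simp [Function.update, h]
    rw [h, Finset.sum_update_of_mem (Finset.mem_univ l),
      Finset.sum_sdiff_eq_sub (Finset.singleton_subset_iff.mpr (Finset.mem_univ l)),
      Finset.sum_singleton]
    ring
  have hZupd : ∀ (l : Fin m) (k : Fin 2),
      Z (Function.update μ l (Pt l k)) = S + (a l * σ l) * ξ l k := by
    intro l k
    rw [hZ, hsum_upd, hPt, hS]
    ring
  -- the TPE sums
  have hTPE2 : (∑ l, ∑ k, w l k * (Z (Function.update μ l (Pt l k))) ^ 2)
      = S ^ 2 + ∑ l, (a l) ^ 2 * (σ l) ^ 2 := by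
    have hper : ∀ l : Fin m, (∑ k, w l k * (Z (Function.update μ l (Pt l k))) ^ 2)
        = S ^ 2 * (1 / (m:ℝ)) + (a l) ^ 2 * (σ l) ^ 2 := by
      intro l
      rw [Fin.sum_univ_two, hZupd, hZupd]
      linear_combination S ^ 2 * hA l + 2 * S * (a l * σ l) * hB l + (a l * σ l) ^ 2 * hC l
    rw [Finset.sum_congr rfl fun l _ => hper l, Finset.sum_add_distrib,
      Finset.sum_const, Finset.card_univ, Fintype.card_fin, nsmul_eq_mul]
    field_simp
  have hTPE1 : (∑ l, ∑ k, w l k * Z (Function.update μ l (Pt l k))) = S := by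
    have hper : ∀ l : Fin m, (∑ k, w l k * Z (Function.update μ l (Pt l k)))
        = S * (1 / (m:ℝ)) := by
      intro l
      rw [Fin.sum_univ_two, hZupd, hZupd]
      linear_combination S * hA l + (a l * σ l) * hB l
    rw [Finset.sum_congr rfl fun l _ => hper l, Finset.sum_const, Finset.card_univ,
      Fintype.card_fin, nsmul_eq_mul]
    field_simp
  -- integrability
  have hL2 : ∀ l, MemLp (fun ω => X l ω - μ l) 2 P := by
    intro l
    have h1 : MemLp (X l) 2 P :=
      (memLp_two_iff_integrable_sq (hint l).aestronglyMeasurable).mpr (hint2 l)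
    exact h1.sub (memLp_const (μ l))
  have hmul : ∀ i j, Integrable (fun ω => (X i ω - μ i) * (X j ω - μ j)) P := by
    intro i j
    have h : MemLp ((fun ω => X i ω - μ i) • (fun ω => X j ω - μ j)) 1 P :=
      (hL2 j).smul (hL2 i)
    rw [← memLp_one_iff_integrable]
    exact h
  have hYint : ∀ l, Integrable (fun ω => X l ω - μ l) P :=
    fun l => (hint l).sub (integrable_const (μ l))
  have hY0 : ∀ l, ∫ ω, (X l ω - μ l) ∂P = 0 := by
    intro l
    rw [integral_sub (hint l) (integrable_const (μ l)), hmean, integral_const]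
    simp
  have hYij : ∀ i j, ∫ ω, (X i ω - μ i) * (X j ω - μ j) ∂P
      = if i = j then (σ i) ^ 2 else 0 := by
    intro i j
    by_cases h : i = j
    · subst h
      simp only [if_pos rfl]
      rw [← hvar i]
      congr 1; funext ω; ring
    · rw [if_neg h]; exact huncorr i j h
  -- expansion of the integrand
  have hpt : ∀ ω, (Z fun l => X l ω) ^ 2
      = S ^ 2 + (2 * S) * (∑ l, a l * (X l ω - μ l))
        + ∑ i, ∑ j, (a i * a j) * ((X i ω - μ i) * (X j ω - μ j)) := by
    intro ω
    have h1 : (Z fun l => X l ω) = S + ∑ l, a l * (X l ω - μ l) := by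
      rw [hZ, hS]
      simp only [mul_sub, Finset.sum_sub_distrib]
      ring
    rw [h1]
    have h2 : (∑ l, a l * (X l ω - μ l)) * (∑ l, a l * (X l ω - μ l))
        = ∑ i, ∑ j, (a i * a j) * ((X i ω - μ i) * (X j ω - μ j)) := by
      rw [Finset.sum_mul_sum]
      exact Finset.sum_congr rfl fun i _ => Finset.sum_congr rfl fun j _ => by ring
    nlinarith [h2]
  have hTint : Integrable (fun ω => ∑ l, a l * (X l ω - μ l)) P :=
    integrable_finset_sum _ fun l _ => (hYint l).const_mul (a l)
  have hDint : Integrable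
      (fun ω => ∑ i, ∑ j, (a i * a j) * ((X i ω - μ i) * (X j ω - μ j))) P :=
    integrable_finset_sum _ fun i _ =>
      integrable_finset_sum _ fun j _ => (hmul i j).const_mul _
  have hE2 : (∫ ω, (Z (fun l => X l ω)) ^ 2 ∂P)
      = S ^ 2 + ∑ l, (a l) ^ 2 * (σ l) ^ 2 := by
    simp only [hpt]
    have h2 : Integrable (fun ω => (2 * S) * ∑ l, a l * (X l ω - μ l)) P :=
      hTint.const_mul _
    have h1 : Integrable
        (fun ω => S ^ 2 + (2 * S) * ∑ l, a l * (X l ω - μ l)) P :=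
      (integrable_const _).add h2
    rw [integral_add h1 hDint, integral_add (integrable_const (S ^ 2)) h2,
      integral_const, integral_const_mul, integral_finset_sum _
        (fun l _ => (hYint l).const_mul (a l))]
    simp only [integral_const_mul, hY0, mul_zero, Finset.sum_const_zero]
    rw [integral_finset_sum _ (fun i _ =>
      integrable_finset_sum _ fun j _ => (hmul i j).const_mul _)]
    have hinner : ∀ i : Fin m,
        (∫ ω, ∑ j, (a i * a j) * ((X i ω - μ i) * (X j ω - μ j)) ∂P)
        = (a i) ^ 2 * (σ i) ^ 2 := by
      intro i
      rw [integral_finset_sum _ (fun j _ => (hmul i j).const_mul _)]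
      simp only [integral_const_mul, hYij]
      rw [Finset.sum_eq_single i]
      · rw [if_pos rfl]; ring
      · intro j _ hji
        simp [Ne.symm hji]
      · intro h; exact absurd (Finset.mem_univ i) h
    rw [Finset.sum_congr rfl fun i _ => hinner i]
    simp
  have hE1 : (∫ ω, Z (fun l => X l ω) ∂P) = S := by
    simp only [hZ]
    rw [integral_add (integrable_const b)
      (integrable_finset_sum _ fun l _ => (hint l).const_mul (a l)),
      integral_const, integral_finset_sum _ (fun l _ => (hint l).const_mul (a l))]
    simp only [integral_const_mul, hmean]
    simp [hS]
  refine ⟨by rw [hTPE2, hE2], by rw [hE2, hS], ?_⟩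
  rw [hTPE2, hE2, hTPE1, hE1]
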